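/- Let f : ℝⁿ → ℝ be convex and L-smooth, and let 0 < η ≤ 2/L. Then the gradient descent map x ↦ x − η∇f(x) is nonexpansive: for all x, y, ‖(x − η∇f(x)) − (y − η∇f(y))‖ ≤ ‖x − y‖. -/

import Mathlib

open scoped RealInnerProductSpace

private lemma gd_line_hasDerivAt {n : ℕ} {f : EuclideanSpace ℝ (Fin n) → ℝ}
    (hdiff : Differentiable ℝ f) (x v : EuclideanSpace ℝ (Fin n)) (t : ℝ) :
    HasDerivAt (fun s : ℝ => f (x + s • v)) ⟪gradient f (x + t • v), v⟫ t := by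
  have hc : HasDerivAt (fun s : ℝ => x + s • v) v t := by
    simpa using ((hasDerivAt_id t).smul_const v).const_add x
  have hf := (hdiff (x + t • v)).hasGradientAt.hasFDerivAt
  simpa [InnerProductSpace.toDual_apply_apply, Function.comp_def] using hf.comp_hasDerivAt t hc

private lemma gd_first_order {n : ℕ} {f : EuclideanSpace ℝ (Fin n) → ℝ}
    (hdiff : Differentiable ℝ f) (hconv : ConvexOn ℝ Set.univ f)
    (x z : EuclideanSpace ℝ (Fin n)) :
    f x + ⟪gradient f x, z - x⟫ ≤ f z := by
  have e0 : x + (0:ℝ) • (z - x) = x := by simp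
  have e1 : x + (1:ℝ) • (z - x) = z := by simp
  have gconv : ConvexOn ℝ Set.univ (fun t : ℝ => f (x + t • (z - x))) := by
    have h := hconv.comp_affineMap (AffineMap.lineMap x z)
    have he : (f ∘ (AffineMap.lineMap x z : ℝ →ᵃ[ℝ] EuclideanSpace ℝ (Fin n)))
        = fun t : ℝ => f (x + t • (z - x)) := by
      funext t
      simp only [Function.comp_apply, AffineMap.lineMap_apply_module]
      congr 1
      module
    rw [he] at h
    simpa using h
  have hd := gd_line_hasDerivAt hdiff x (z - x) 0
  rw [e0] at hd
  have hs := gconv.le_slope_of_hasDerivAt (Set.mem_univ (0:ℝ)) (Set.mem_univ (1:ℝ)) one_pos hd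
  rw [slope_def_field] at hs
  rw [e0, e1] at hs
  rw [sub_zero, div_one] at hs
  linarith

private lemma gd_descent {n : ℕ} {f : EuclideanSpace ℝ (Fin n) → ℝ} {L : ℝ}
    (hL : 0 < L) (hdiff : Differentiable ℝ f)
    (hsmooth : ∀ x y, ‖gradient f x - gradient f y‖ ≤ L * ‖x - y‖)
    (x y : EuclideanSpace ℝ (Fin n)) :
    f y ≤ f x + ⟪gradient f x, y - x⟫ + L / 2 * ‖y - x‖ ^ 2 := by
  set v := y - x with hv
  set h : ℝ → ℝ := fun t =>
    f x + t * ⟪gradient f x, v⟫ + L / 2 * t ^ 2 * ‖v‖ ^ 2 - f (x + t • v) with hh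
  have hderiv : ∀ t : ℝ, HasDerivAt h
      (⟪gradient f x, v⟫ + L * t * ‖v‖ ^ 2 - ⟪gradient f (x + t • v), v⟫) t := by
    intro t
    have h1 : HasDerivAt (fun t : ℝ => f x + t * ⟪gradient f x, v⟫ + L / 2 * t ^ 2 * ‖v‖ ^ 2)
        (⟪gradient f x, v⟫ + L * t * ‖v‖ ^ 2) t := by
      have := (((hasDerivAt_id t).mul_const ⟪gradient f x, v⟫).const_add (f x)).add
        ((((hasDerivAt_pow 2 t).const_mul (L / 2)).mul_const (‖v‖ ^ 2)))
      exact this.congr_deriv (by ring)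
    exact h1.sub (gd_line_hasDerivAt hdiff x v t)
  have hdiffh : Differentiable ℝ h := fun t => (hderiv t).differentiableAt
  have hmono : MonotoneOn h (Set.Icc (0:ℝ) 1) := by
    apply monotoneOn_of_deriv_nonneg (convex_Icc 0 1) hdiffh.continuous.continuousOn
      (hdiffh.differentiableOn)
    intro t ht
    rw [interior_Icc] at ht
    rw [(hderiv t).deriv]
    have hb : ⟪gradient f (x + t • v) - gradient f x, v⟫ ≤ L * t * ‖v‖ ^ 2 := by
      calc ⟪gradient f (x + t • v) - gradient f x, v⟫
          ≤ ‖gradient f (x + t • v) - gradient f x‖ * ‖v‖ := real_inner_le_norm _ _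
        _ ≤ (L * ‖x + t • v - x‖) * ‖v‖ := by
            gcongr
            exact hsmooth _ _
        _ = L * t * ‖v‖ ^ 2 := by
            rw [add_sub_cancel_left, norm_smul, Real.norm_eq_abs, abs_of_nonneg ht.1.le]
            ring
    have := inner_sub_left (𝕜 := ℝ) (gradient f (x + t • v)) (gradient f x) v
    rw [this] at hb
    linarith
  have h01 := hmono (Set.mem_Icc.mpr ⟨le_refl 0, zero_le_one⟩)
    (Set.mem_Icc.mpr ⟨zero_le_one, le_refl 1⟩) zero_le_one
  have e0 : h 0 = 0 := by simp [hh]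
  have e1 : h 1 = f x + ⟪gradient f x, v⟫ + L / 2 * ‖v‖ ^ 2 - f y := by
    simp [hh, hv]
  rw [e0, e1] at h01
  linarith
private lemma gd_bregman {n : ℕ} {f : EuclideanSpace ℝ (Fin n) → ℝ} {L : ℝ}
    (hL : 0 < L) (hdiff : Differentiable ℝ f) (hconv : ConvexOn ℝ Set.univ f)
    (hsmooth : ∀ x y, ‖gradient f x - gradient f y‖ ≤ L * ‖x - y‖)
    (x y : EuclideanSpace ℝ (Fin n)) :
    f x + ⟪gradient f x, y - x⟫ + 1 / (2 * L) * ‖gradient f y - gradient f x‖ ^ 2 ≤ f y := by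
  set a := gradient f x with ha
  set φ : EuclideanSpace ℝ (Fin n) → ℝ := fun z => f z - ⟪a, z⟫ with hφ
  have hgrad : ∀ z, HasGradientAt φ (gradient f z - a) z := by
    intro z
    have h1 : HasFDerivAt φ (fderiv ℝ f z - InnerProductSpace.toDual ℝ _ a) z := by
      exact ((hdiff z).hasFDerivAt).sub (InnerProductSpace.toDual ℝ _ a).hasFDerivAt
    have := h1.hasGradientAt
    convert this using 1
    rw [map_sub]
    simp [gradient, ha]
  have hφdiff : Differentiable ℝ φ := fun z => (hgrad z).hasFDerivAt.differentiableAt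
  have hφgrad : ∀ z, gradient φ z = gradient f z - a := fun z => (hgrad z).gradient
  have hφconv : ConvexOn ℝ Set.univ φ := by
    apply hconv.sub
    refine ⟨convex_univ, fun z _ w _ p q hp hq hpq => le_of_eq ?_⟩
    simp [inner_add_right, inner_smul_right]
  have hφsmooth : ∀ u w, ‖gradient φ u - gradient φ w‖ ≤ L * ‖u - w‖ := by
    intro u w
    rw [hφgrad, hφgrad, sub_sub_sub_cancel_right]
    exact hsmooth u w
  set g := gradient φ y with hg
  have hmin : φ x ≤ φ (y - (1 / L) • g) := by
    have := gd_first_order hφdiff hφconv x (y - (1 / L) • g)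
    rw [hφgrad, ha, sub_self] at this
    simpa using this
  have hdesc := gd_descent hL hφdiff hφsmooth y (y - (1 / L) • g)
  rw [← hg] at hdesc
  have e1 : (y - (1 / L) • g) - y = -((1 / L) • g) := by abel
  rw [e1] at hdesc
  have e2 : ⟪g, -((1 / L) • g)⟫ = -(1 / L * ‖g‖ ^ 2) := by
    rw [inner_neg_right, real_inner_smul_right, real_inner_self_eq_norm_sq]
  have e3 : ‖-((1 / L) • g)‖ ^ 2 = (1 / L) ^ 2 * ‖g‖ ^ 2 := by
    rw [norm_neg, norm_smul, Real.norm_eq_abs, mul_pow, sq_abs]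
  rw [e2, e3] at hdesc
  have key : φ x ≤ φ y - 1 / (2 * L) * ‖g‖ ^ 2 := by
    have hL' : L ≠ 0 := hL.ne'
    calc φ x ≤ φ (y - (1 / L) • g) := hmin
      _ ≤ φ y + -(1 / L * ‖g‖ ^ 2) + L / 2 * ((1 / L) ^ 2 * ‖g‖ ^ 2) := hdesc
      _ = φ y - 1 / (2 * L) * ‖g‖ ^ 2 := by field_simp; ring
  have hgval : g = gradient f y - a := hφgrad y
  rw [hφ] at key
  simp only [hgval] at key
  have einner : ⟪a, y - x⟫ = ⟪a, y⟫ - ⟪a, x⟫ := inner_sub_right a y x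
  simp only [ha] at key einner ⊢
  linarith

private lemma gd_coco {n : ℕ} {f : EuclideanSpace ℝ (Fin n) → ℝ} {L : ℝ}
    (hL : 0 < L) (hdiff : Differentiable ℝ f) (hconv : ConvexOn ℝ Set.univ f)
    (hsmooth : ∀ x y, ‖gradient f x - gradient f y‖ ≤ L * ‖x - y‖)
    (x y : EuclideanSpace ℝ (Fin n)) :
    ‖gradient f x - gradient f y‖ ^ 2 ≤ L * ⟪gradient f x - gradient f y, x - y⟫ := by
  have h1 := gd_bregman hL hdiff hconv hsmooth x y
  have h2 := gd_bregman hL hdiff hconv hsmooth y x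
  rw [norm_sub_rev] at h2
  rw [show gradient f x - gradient f y = -(gradient f y - gradient f x) by abel, norm_neg]
  set d := gradient f y - gradient f x with hd
  have ea : ⟪gradient f x, y - x⟫ = -⟪gradient f x, x - y⟫ := by
    rw [← inner_neg_right]; congr 1; abel
  have eb : ⟪-d, x - y⟫ = ⟪gradient f x, x - y⟫ - ⟪gradient f y, x - y⟫ := by
    rw [hd]
    rw [show -(gradient f y - gradient f x) = gradient f x - gradient f y by abel,
      inner_sub_left]
  have hsum : 1 / (2 * L) * ‖d‖ ^ 2 + 1 / (2 * L) * ‖d‖ ^ 2 = 1 / L * ‖d‖ ^ 2 := by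
    field_simp; ring
  have h3 : 1 / L * ‖d‖ ^ 2 ≤ ⟪-d, x - y⟫ := by rw [eb]; linarith
  calc ‖d‖ ^ 2 = L * (1 / L * ‖d‖ ^ 2) := by field_simp
    _ ≤ L * ⟪-d, x - y⟫ := mul_le_mul_of_nonneg_left h3 hL.le

/-- The gradient descent map of a convex `L`-smooth function with step size
`0 < η ≤ 2/L` is nonexpansive. -/
theorem gradient_descent_nonexpansive {n : ℕ}
    (f : EuclideanSpace ℝ (Fin n) → ℝ) (L η : ℝ) (hL : 0 < L)
    (hη : 0 < η) (hη' : η ≤ 2 / L)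
    (hdiff : Differentiable ℝ f)
    (hconv : ConvexOn ℝ Set.univ f)
    (hsmooth : ∀ x y, ‖gradient f x - gradient f y‖ ≤ L * ‖x - y‖) :
    ∀ x y : EuclideanSpace ℝ (Fin n),
      ‖(x - η • gradient f x) - (y - η • gradient f y)‖ ≤ ‖x - y‖ := by
  intro x y
  set g := gradient f x - gradient f y with hg
  set u := x - y with hu
  have hcoco : ‖g‖ ^ 2 ≤ L * ⟪g, u⟫ := gd_coco hL hdiff hconv hsmooth x y
  have e : (x - η • gradient f x) - (y - η • gradient f y) = u - η • g := by
    rw [hg, hu, smul_sub]; abel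
  rw [e]
  have hsq : ‖u - η • g‖ ^ 2 ≤ ‖u‖ ^ 2 := by
    have expand : ‖u - η • g‖ ^ 2 = ‖u‖ ^ 2 - 2 * (η * ⟪u, g⟫) + η ^ 2 * ‖g‖ ^ 2 := by
      rw [norm_sub_sq_real, real_inner_smul_right, norm_smul, Real.norm_eq_abs, mul_pow, sq_abs]
    rw [expand]
    have h2L : η * L ≤ 2 := (le_div_iff₀ hL).mp hη'
    have t1 : 0 ≤ η * (2 - η * L) * ‖g‖ ^ 2 :=
      mul_nonneg (mul_nonneg hη.le (by linarith)) (sq_nonneg _)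
    have t2 : 0 ≤ 2 * η * (L * ⟪g, u⟫ - ‖g‖ ^ 2) :=
      mul_nonneg (by linarith) (sub_nonneg.mpr hcoco)
    have hcomm : ⟪u, g⟫ = ⟪g, u⟫ := real_inner_comm g u
    have hL2 : L * (η ^ 2 * ‖g‖ ^ 2) ≤ L * (2 * (η * ⟪g, u⟫)) := by nlinarith [t1, t2]
    have hkey := (mul_le_mul_iff_right₀ hL).mp hL2
    rw [hcomm]
    linarith
  calc ‖u - η • g‖ = Real.sqrt (‖u - η • g‖ ^ 2) := (Real.sqrt_sq (norm_nonneg _)).symm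
    _ ≤ Real.sqrt (‖u‖ ^ 2) := Real.sqrt_le_sqrt hsq
    _ = ‖u‖ := Real.sqrt_sq (norm_nonneg _)
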